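/- arXiv:1602.05032 — 8 statements merged into one kernel-verified Lean document; each statement's English description precedes it below -/
import Mathlib

section
/- A word λ = λ₁λ₂⋯λₙ over F_q is aperiodic (all n cyclic rotations of λ are distinct) if and only if the element γ(λ) = λ₁α + λ₂α^q + λ₃α^{q²} + ⋯ + λₙα^{q^{n-1}} is a root of an irreducible polynomial of degree n over F_q, where {α, α^q, …, α^{q^{n-1}}} is a normal basis of F_{q^n} over F_q. -/
open Polynomial IntermediateField

/-- A word `lam` over `F_q` is aperiodic (all `n` cyclic rotations distinct) iff
`γ(lam) = ∑ lam i • α^(q^i)` is a root of an irreducible polynomial of degree `n`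
(i.e. its minimal polynomial has degree `n`), where the `α^(q^i)` form a normal basis. -/
theorem stmt0 {F E : Type*} [Field F] [Fintype F] [Field E] [Algebra F E]
    (n : ℕ) (hn : 0 < n) (hdim : Module.finrank F E = n)
    (α : E) (b : Module.Basis (Fin n) F E)
    (hb : ∀ i : Fin n, b i = α ^ (Fintype.card F) ^ (i : ℕ))
    (lam : Fin n → F) :
    (Function.Injective fun k : Fin n => fun i : Fin n => lam (i + k)) ↔
      (minpoly F (∑ i : Fin n, lam i • α ^ (Fintype.card F) ^ (i : ℕ))).natDegree = n := by
  classical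
  haveI : NeZero n := ⟨hn.ne'⟩
  set q := Fintype.card F with hq
  set γ := ∑ i : Fin n, lam i • α ^ q ^ (i : ℕ) with hγ
  haveI : Module.Finite F E := Module.Finite.of_basis b
  haveI : Finite E := Module.finite_of_finite F
  haveI : Fintype E := Fintype.ofFinite E
  have hq1 : 1 < q := Fintype.one_lt_card
  -- characteristic facts
  set p := ringChar F with hpdef
  haveI hFp : CharP F p := ringChar.charP F
  haveI hEp : CharP E p := charP_of_injective_algebraMap (algebraMap F E).injective p
  obtain ⟨f, hpf, hqp⟩ := FiniteField.card F p
  haveI : Fact p.Prime := ⟨hpf⟩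
  have hqp' : q = p ^ (f : ℕ) := hqp
  -- the q-power maps are injective
  have hinj : ∀ m : ℕ, Function.Injective fun x : E => x ^ q ^ m := by
    intro m x y hxy
    simp only at hxy
    have h0 : (x - y) ^ q ^ m = 0 := by
      rw [hqp'] at hxy ⊢
      rw [← pow_mul, sub_pow_char_pow, pow_mul, hxy, sub_self]
    have := pow_eq_zero_iff (pow_ne_zero m (by positivity : q ≠ 0)) |>.mp h0
    exact sub_eq_zero.mp this
  -- cardinality of E
  have hcardE : Fintype.card E = q ^ n := by
    rw [Module.card_fintype b, Fintype.card_fin]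
  have hEpow : ∀ x : E, x ^ q ^ n = x := fun x => by
    rw [← hcardE]; exact FiniteField.pow_card x
  -- periodicity of α powers
  have key : ∀ t r : ℕ, α ^ q ^ (n * t + r) = α ^ q ^ r := by
    intro t r
    induction t with
    | zero => simp
    | succ t ih =>
      have h1 : n * (t + 1) + r = (n * t + r) + n := by ring
      rw [h1, pow_add, pow_mul, hEpow, ih]
  have halpha : ∀ m : ℕ, α ^ q ^ m = α ^ q ^ (m % n) := by
    intro m
    conv_lhs => rw [show m = n * (m / n) + m % n from (Nat.div_add_mod m n).symm]
    exact key _ _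
  -- the rotation identity
  have hrot : ∀ k : Fin n, γ ^ q ^ (k : ℕ) = ∑ j : Fin n, lam (j - k) • b j := by
    intro k
    have term : ∀ i : Fin n, (lam i • α ^ q ^ (i : ℕ)) ^ q ^ (k : ℕ) = lam i • b (i + k) := by
      intro i
      have hlam : lam i ^ q ^ (k : ℕ) = lam i := FiniteField.pow_card_pow _ _
      rw [_root_.smul_pow, hlam, ← pow_mul, ← pow_add, halpha, hb, Fin.val_add]
    have step1 : γ ^ q ^ (k : ℕ) = ∑ i : Fin n, lam i • b (i + k) := by
      rw [hγ, hqp', ← pow_mul, sum_pow_char_pow]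
      refine Finset.sum_congr rfl fun i _ => ?_
      rw [pow_mul, ← hqp', term]
    rw [step1]
    exact Fintype.sum_equiv (Equiv.addRight k) _ _
      (fun i => by simp [add_sub_cancel_right])
  have hrepr : ∀ k : Fin n, ⇑(b.repr (γ ^ q ^ (k : ℕ))) = fun j => lam (j - k) := by
    intro k; rw [hrot, b.repr_sum_self]
  -- minimal polynomial facts
  have hint : IsIntegral F γ := IsIntegral.of_finite F γ
  set D := (minpoly F γ).natDegree with hD
  have hD1 : 0 < D := minpoly.natDegree_pos hint
  -- cardinality of F⟮γ⟯
  have hmem : γ ∈ F⟮γ⟯ := IntermediateField.mem_adjoin_simple_self F γ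
  haveI : FiniteDimensional F F⟮γ⟯ := IntermediateField.adjoin.finiteDimensional hint
  haveI : Finite (F⟮γ⟯ : IntermediateField F E) := Subtype.finite
  haveI : Fintype (F⟮γ⟯ : IntermediateField F E) := Fintype.ofFinite _
  have hfr : Module.finrank F F⟮γ⟯ = D := IntermediateField.adjoin.finrank hint
  have hcardK : Fintype.card F⟮γ⟯ = q ^ D := by
    rw [Module.card_fintype (Module.finBasis F F⟮γ⟯), Fintype.card_fin, hfr]
  -- γ ^ q ^ D = γ
  have hA : γ ^ q ^ D = γ := by
    have h1 : (⟨γ, hmem⟩ : F⟮γ⟯) ^ q ^ D = ⟨γ, hmem⟩ := by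
      rw [← hcardK]; exact FiniteField.pow_card _
    have := congrArg (fun x : F⟮γ⟯ => (x : E)) h1
    simpa using this
  -- minimality: D ≤ m whenever γ ^ q ^ m = γ with m > 0
  have hmin : ∀ m : ℕ, 0 < m → γ ^ q ^ m = γ → D ≤ m := by
    intro m hm hγm
    -- subalgebra of elements fixed by the q^m power map
    let S : Subalgebra F E :=
      { carrier := {x | x ^ q ^ m = x}
        mul_mem' := fun {a c} ha hc => by
          simp only [Set.mem_setOf_eq] at *
          rw [mul_pow, ha, hc]
        one_mem' := by simp
        add_mem' := fun {a c} ha hc => by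
          simp only [Set.mem_setOf_eq] at *
          rw [hqp'] at ha hc ⊢
          rw [← pow_mul, add_pow_char_pow, pow_mul, ha, hc]
        zero_mem' := by
          show (0 : E) ^ q ^ m = 0
          exact zero_pow (by positivity)
        algebraMap_mem' := fun r => by
          show algebraMap F E r ^ q ^ m = algebraMap F E r
          have hr : r ^ q ^ m = r := FiniteField.pow_card_pow _ _
          rw [← map_pow, hr] }
    have hKS : ∀ x : F⟮γ⟯, (x : E) ^ q ^ m = (x : E) := by
      intro x
      have hsub : Algebra.adjoin F {γ} ≤ S := Algebra.adjoin_le (by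
        intro y hy
        rw [Set.mem_singleton_iff] at hy
        subst hy
        exact hγm)
      have hx : (x : E) ∈ F⟮γ⟯.toSubalgebra := x.2
      rw [IntermediateField.adjoin_simple_toSubalgebra_of_isAlgebraic hint.isAlgebraic] at hx
      exact hsub hx
    have hne0 : (X ^ q ^ m - X : E[X]) ≠ 0 :=
      FiniteField.X_pow_card_pow_sub_X_ne_zero E hm.ne' hq1
    have hcardle : q ^ D ≤ q ^ m := by
      rw [← hcardK]
      calc Fintype.card F⟮γ⟯
          = (Finset.univ.image (fun x : F⟮γ⟯ => (x : E))).card := by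
            rw [Finset.card_image_of_injective _ Subtype.coe_injective, Finset.card_univ]
        _ ≤ (X ^ q ^ m - X : E[X]).roots.toFinset.card := by
            apply Finset.card_le_card
            intro y hy
            simp only [Finset.mem_image, Finset.mem_univ, true_and] at hy
            obtain ⟨x, rfl⟩ := hy
            rw [Multiset.mem_toFinset, mem_roots hne0]
            simp [sub_eq_zero, hKS x]
        _ ≤ Multiset.card (X ^ q ^ m - X : E[X]).roots := Multiset.toFinset_card_le _
        _ ≤ (X ^ q ^ m - X : E[X]).natDegree := card_roots' _
        _ = q ^ m := FiniteField.X_pow_card_pow_sub_X_natDegree_eq E hm.ne' hq1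
    exact (Nat.pow_le_pow_iff_right hq1).mp hcardle
  have hDn : D ≤ n := hmin n hn (hEpow γ)
  -- distinct q-power maps
  have hdist : ∀ a c : ℕ, a < c → c < n → D = n → γ ^ q ^ a = γ ^ q ^ c → False := by
    intro a c hac hcn hDeq e
    have h1 : (γ ^ q ^ (c - a)) ^ q ^ a = γ ^ q ^ a := by
      rw [← pow_mul, ← pow_add, Nat.sub_add_cancel hac.le]
      exact e.symm
    have e2 : γ ^ q ^ (c - a) = γ := hinj a h1
    have := hmin (c - a) (by omega) e2
    omega
  constructor
  · intro hinjective
    by_contra hne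
    have hDlt : D < n := lt_of_le_of_ne hDn hne
    set k0 : Fin n := ⟨D, hDlt⟩ with hk0
    have h1 : γ ^ q ^ (k0 : ℕ) = γ ^ q ^ ((0 : Fin n) : ℕ) := by
      simp only [hk0, Fin.val_zero, pow_zero, pow_one]
      exact hA
    have h2 : (fun j : Fin n => lam (j - k0)) = fun j : Fin n => lam (j - 0) := by
      rw [← hrepr, ← hrepr, h1]
    have h3 : (fun i : Fin n => lam (i + -k0)) = fun i : Fin n => lam (i + -0) := by
      funext i
      have := congrFun h2 i
      simpa [sub_eq_add_neg] using this
    have h4 : -k0 = -(0 : Fin n) := hinjective h3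
    have h5 : k0 = 0 := neg_injective h4
    have : (k0 : ℕ) = 0 := by rw [h5]; simp
    simp only [hk0] at this
    omega
  · intro hDeq k k' hkk'
    by_contra hne
    have hco : ⇑(b.repr (γ ^ q ^ ((-k : Fin n) : ℕ)))
        = ⇑(b.repr (γ ^ q ^ ((-k' : Fin n) : ℕ))) := by
      rw [hrepr, hrepr]
      funext j
      have := congrFun hkk' (j : Fin n)
      simpa [sub_neg_eq_add] using this
    have e1 : γ ^ q ^ ((-k : Fin n) : ℕ) = γ ^ q ^ ((-k' : Fin n) : ℕ) :=
      b.repr.injective (DFunLike.coe_injective hco)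
    have hvne : ((-k : Fin n) : ℕ) ≠ ((-k' : Fin n) : ℕ) := by
      intro h
      exact hne (neg_injective (Fin.val_injective h))
    rcases lt_trichotomy ((-k : Fin n) : ℕ) ((-k' : Fin n) : ℕ) with h | h | h
    · exact hdist _ _ h (Fin.is_lt _) hDeq e1
    · exact hvne h
    · exact hdist _ _ h (Fin.is_lt _) hDeq e1.symm
end

section
/- Two aperiodic words λ, μ ∈ F_q^n are cyclic rotations of each other if and only if γ(λ) and γ(μ) have the same minimal polynomial over F_q, where γ(λ) = λ₁α + λ₂α^q + ⋯ + λₙα^{q^{n-1}} for a fixed normal basis {α, α^q, …, α^{q^{n-1}}} of F_{q^n}. -/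
open Polynomial

lemma frobAlgHom (F E : Type*) [Field F] [Fintype F] [Field E] [Algebra F E] :
    ∃ ψ : E →ₐ[F] E, ∀ x, ψ x = x ^ Fintype.card F := by
  obtain ⟨p, hpc⟩ := CharP.exists F
  haveI : CharP F p := hpc
  have hp : p.Prime := CharP.char_is_prime F p
  haveI : Fact p.Prime := ⟨hp⟩
  haveI : CharP E p := charP_of_injective_algebraMap (algebraMap F E).injective p
  obtain ⟨m, -, hqm⟩ := FiniteField.card F p
  refine ⟨{ toRingHom := iterateFrobenius E p m, commutes' := fun a => ?_ }, fun x => ?_⟩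
  · show iterateFrobenius E p m (algebraMap F E a) = algebraMap F E a
    rw [iterateFrobenius_def, ← map_pow, ← hqm, FiniteField.pow_card]
  · show iterateFrobenius E p m x = _
    rw [iterateFrobenius_def, ← hqm]

lemma card_le_of_pow_eq {E : Type*} [Field E] [Fintype E] {s : ℕ} (hs : 1 < s)
    (h : ∀ x : E, x ^ s = x) : Fintype.card E ≤ s := by
  classical
  have hne : (X ^ s - X : E[X]) ≠ 0 := FiniteField.X_pow_card_sub_X_ne_zero E hs
  have hsub : (Finset.univ : Finset E) ⊆ (X ^ s - X : E[X]).roots.toFinset := by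
    intro x _
    simp only [Multiset.mem_toFinset, mem_roots hne, IsRoot.def, eval_sub, eval_pow, eval_X]
    exact sub_eq_zero.mpr (h x)
  calc Fintype.card E = (Finset.univ : Finset E).card := rfl
    _ ≤ (X ^ s - X : E[X]).roots.toFinset.card := Finset.card_le_card hsub
    _ ≤ Multiset.card (X ^ s - X : E[X]).roots := Multiset.toFinset_card_le _
    _ ≤ (X ^ s - X : E[X]).natDegree := (X ^ s - X : E[X]).card_roots'
    _ = s := FiniteField.X_pow_card_sub_X_natDegree_eq E hs

/-- Two aperiodic words are cyclic rotations of each other iff the corresponding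
elements `γ(λ)`, `γ(μ)` (w.r.t. a fixed normal basis) have the same minimal polynomial. -/
theorem stmt3 {F E : Type*} [Field F] [Fintype F] [Field E] [Algebra F E]
    (n : ℕ) (hn : 0 < n) (hdim : Module.finrank F E = n)
    (α : E) (b : Module.Basis (Fin n) F E)
    (hb : ∀ i : Fin n, b i = α ^ (Fintype.card F) ^ (i : ℕ))
    (lam mu : Fin n → F)
    (hlam : Function.Injective fun k : Fin n => fun i : Fin n => lam (i + k))
    (hmu : Function.Injective fun k : Fin n => fun i : Fin n => mu (i + k)) :
    (∃ k : Fin n, ∀ i : Fin n, mu i = lam (i + k)) ↔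
      minpoly F (∑ i : Fin n, lam i • α ^ (Fintype.card F) ^ (i : ℕ)) =
        minpoly F (∑ i : Fin n, mu i • α ^ (Fintype.card F) ^ (i : ℕ)) := by
  classical
  haveI : NeZero n := ⟨hn.ne'⟩
  haveI : Module.Finite F E := Module.Finite.of_basis b
  haveI : Fintype E := Module.fintypeOfFintype b
  set q : ℕ := Fintype.card F with hq
  have hq1 : 1 < q := Fintype.one_lt_card
  have hcardE : Fintype.card E = q ^ n := by
    rw [Module.card_eq_pow_finrank (K := F) (V := E), hdim]
  -- Frobenius as an F-algebra equivalence
  obtain ⟨ψ, hψ⟩ := frobAlgHom F E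
  have hψinj : Function.Bijective ψ := Finite.injective_iff_bijective.mp ψ.toRingHom.injective
  let φ : E ≃ₐ[F] E := AlgEquiv.ofBijective ψ hψinj
  have hφ : ∀ x, φ x = x ^ q := hψ
  have hφpow : ∀ (k : ℕ) (x : E), (φ ^ k) x = x ^ q ^ k := by
    intro k
    induction k with
    | zero => intro x; simp
    | succ k ih =>
      intro x
      rw [pow_succ, AlgEquiv.mul_apply, ih, hφ, ← pow_mul, ← pow_succ']
  -- x ^ q ^ n = x
  have hqn : ∀ x : E, x ^ q ^ n = x := by
    intro x
    rw [← hcardE, FiniteField.pow_card]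
  have hmul : ∀ (t : ℕ) (x : E), x ^ q ^ (n * t) = x := by
    intro t
    induction t with
    | zero => intro x; simp
    | succ t ih =>
      intro x
      rw [Nat.mul_succ, pow_add, pow_mul, ih, hqn]
  have hαmod : ∀ s : ℕ, α ^ q ^ s = α ^ q ^ (s % n) := by
    intro s
    conv_lhs => rw [← Nat.div_add_mod s n, Nat.add_comm, pow_add, pow_mul, hmul]
  -- the coordinate map is injective
  have hGinj : ∀ c d : Fin n → F,
      ∑ i : Fin n, c i • α ^ q ^ (i : ℕ) = ∑ i : Fin n, d i • α ^ q ^ (i : ℕ) → c = d := by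
    intro c d hcd
    have hc : ∀ e : Fin n → F, ∑ i : Fin n, e i • α ^ q ^ (i : ℕ) = ∑ i, e i • b i :=
      fun e => Finset.sum_congr rfl fun i _ => by rw [hb]
    rw [hc c, hc d] at hcd
    have h2 : ⇑(b.repr (∑ i, c i • b i)) = ⇑(b.repr (∑ i, d i • b i)) := by rw [hcd]
    rwa [b.repr_sum_self, b.repr_sum_self] at h2
  -- conjugation formula
  have hconj : ∀ (c : Fin n → F) (t : ℕ),
      (∑ i : Fin n, c i • α ^ q ^ (i : ℕ)) ^ q ^ t
        = ∑ i : Fin n, c i • α ^ q ^ (((i : ℕ) + t) % n) := by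
    intro c t
    rw [← hφpow t, map_sum]
    refine Finset.sum_congr rfl fun i _ => ?_
    rw [map_smul, hφpow, ← pow_mul, ← pow_add, hαmod]
  constructor
  · rintro ⟨k, hk⟩
    have key : (∑ i : Fin n, lam i • α ^ q ^ (i : ℕ)) ^ q ^ (n - (k : ℕ))
        = ∑ i : Fin n, mu i • α ^ q ^ (i : ℕ) := by
      rw [hconj]
      refine (Fintype.sum_equiv (Equiv.addRight k)
        (fun i : Fin n => mu i • α ^ q ^ (i : ℕ))
        (fun j : Fin n => lam j • α ^ q ^ (((j : ℕ) + (n - (k : ℕ))) % n))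
        (fun i => ?_)).symm
      dsimp only [Equiv.coe_addRight]
      have he : (((i + k : Fin n) : ℕ) + (n - (k : ℕ))) % n = (i : ℕ) := by
        rw [Fin.add_def, Nat.mod_add_mod]
        have h2 : (i : ℕ) + (k : ℕ) + (n - (k : ℕ)) = (i : ℕ) + n := by
          have := k.isLt; omega
        rw [h2, Nat.add_mod_right, Nat.mod_eq_of_lt i.isLt]
      rw [hk i, he]
    rw [← key, ← hφpow]
    exact (minpoly.algEquiv_eq (φ ^ (n - (k : ℕ))) _).symm
  · intro h
    obtain ⟨σ, hσ⟩ := (Normal.minpoly_eq_iff_mem_orbit (F := F) (E := E)).mp h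
    -- the order of φ is n
    have hordn : orderOf φ = n := by
      have h1 : φ ^ n = 1 := by
        ext x
        rw [hφpow]
        exact hqn x
      have hd : orderOf φ ∣ n := orderOf_dvd_of_pow_eq_one h1
      have hall : ∀ x : E, x ^ q ^ orderOf φ = x := by
        intro x
        rw [← hφpow, pow_orderOf_eq_one, AlgEquiv.one_apply]
      have hle : Fintype.card E ≤ q ^ orderOf φ :=
        card_le_of_pow_eq (one_lt_pow₀ hq1 (orderOf_pos φ).ne') hall
      rw [hcardE] at hle
      exact le_antisymm (Nat.le_of_dvd hn hd) ((Nat.pow_le_pow_iff_right hq1).mp hle)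
    -- σ is a power of φ
    have htop : Subgroup.zpowers φ = ⊤ := by
      apply Subgroup.eq_top_of_card_eq
      rw [Nat.card_zpowers, hordn]
      have h3 := IsGalois.card_aut_eq_finrank F E
      rw [hdim] at h3
      rw [← h3, Nat.card_eq_fintype_card]
    have hσz : σ ∈ Subgroup.zpowers φ := htop ▸ Subgroup.mem_top σ
    have hfin : IsOfFinOrder φ := orderOf_pos_iff.mp (orderOf_pos φ)
    obtain ⟨t, ht⟩ := (Submonoid.mem_powers_iff σ φ).mp
      (hfin.mem_powers_iff_mem_zpowers.mpr hσz)
    -- hence γ(lam) = γ(mu) ^ q ^ t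
    have hx : (∑ i : Fin n, lam i • α ^ q ^ (i : ℕ))
        = (∑ i : Fin n, mu i • α ^ q ^ (i : ℕ)) ^ q ^ t := by
      have hσ' : σ (∑ i : Fin n, mu i • α ^ q ^ (i : ℕ))
          = ∑ i : Fin n, lam i • α ^ q ^ (i : ℕ) := hσ
      rw [← hσ', ← ht, hφpow]
    set k : Fin n := ⟨t % n, Nat.mod_lt t hn⟩ with hkdef
    have hmod : ∀ i : Fin n, ((i : ℕ) + t) % n = ((i + k : Fin n) : ℕ) := by
      intro i
      rw [Fin.add_def]
      show _ = ((i : ℕ) + t % n) % n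
      rw [Nat.add_mod_mod]
    have hx2 : (∑ i : Fin n, lam i • α ^ q ^ (i : ℕ))
        = ∑ j : Fin n, mu (j - k) • α ^ q ^ (j : ℕ) := by
      rw [hx, hconj]
      refine Fintype.sum_equiv (Equiv.addRight k)
        (fun i : Fin n => mu i • α ^ q ^ (((i : ℕ) + t) % n))
        (fun j : Fin n => mu (j - k) • α ^ q ^ (j : ℕ)) (fun i => ?_)
      dsimp only [Equiv.coe_addRight]
      rw [add_sub_cancel_right, hmod]
    have hld : lam = fun j => mu (j - k) := hGinj _ _ hx2
    refine ⟨k, fun i => ?_⟩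
    have := congrFun hld (i + k)
    rw [add_sub_cancel_right] at this
    exact this.symm
end

section
/- The map sending a Lyndon word λ of length n over F_q to the minimal polynomial of γ(λ) = λ₁α + λ₂α^q + ⋯ + λₙα^{q^{n-1}} is a bijection from the set of Lyndon words of length n over F_q (with respect to any fixed total order on F_q) onto the set of monic irreducible polynomials of degree n over F_q. -/
/-- Lexicographically-less-than for words indexed by `Fin n`. -/
def lexLt {n : ℕ} {A : Type*} [LT A] (w v : Fin n → A) : Prop :=
  ∃ j : Fin n, (∀ i : Fin n, i < j → w i = v i) ∧ w j < v j

/-- `w` is a Lyndon word: it is strictly lexicographically smaller than all of its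
nontrivial cyclic rotations. -/
def IsLyndonWord {n : ℕ} {A : Type*} [LT A] (w : Fin n → A) : Prop :=
  ∀ k : Fin n, (k : ℕ) ≠ 0 → lexLt w (fun i => w (i + k))

lemma lexLt_iff {n : ℕ} {A : Type*} [LinearOrder A] {w v : Fin n → A} :
    lexLt w v ↔ toLex w < toLex v := Iff.rfl

lemma lexLt_irrefl {n : ℕ} {A : Type*} [LinearOrder A] (w : Fin n → A) :
    ¬ lexLt w w := by
  rintro ⟨j, _, hj⟩; exact lt_irrefl _ hj

lemma lexLt_trichotomy {n : ℕ} {A : Type*} [LinearOrder A] (w v : Fin n → A) :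
    lexLt w v ∨ w = v ∨ lexLt v w := by
  classical
  by_cases h : w = v
  · exact Or.inr (Or.inl h)
  · have hne : ∃ i, w i ≠ v i := by
      by_contra hc; push_neg at hc; exact h (funext hc)
    obtain ⟨i0, hi0⟩ := hne
    obtain ⟨j, hj, hjmin⟩ := Finset.exists_min_image
      (Finset.univ.filter fun i => w i ≠ v i) id ⟨i0, by simp [hi0]⟩
    simp only [Finset.mem_filter, Finset.mem_univ, true_and] at hj
    have hpre : ∀ i : Fin n, i < j → w i = v i := by
      intro i hij
      by_contra hiw
      exact absurd hij (not_lt.mpr (hjmin i (by simp [hiw])))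
    rcases lt_or_gt_of_ne hj with hlt | hgt
    · exact Or.inl ⟨j, hpre, hlt⟩
    · exact Or.inr (Or.inr ⟨j, fun i h' => (hpre i h').symm, hgt⟩)

lemma lexLt_asymm {n : ℕ} {A : Type*} [LinearOrder A] {w v : Fin n → A}
    (h1 : lexLt w v) (h2 : lexLt v w) : False :=
  lt_asymm (lexLt_iff.mp h1) (lexLt_iff.mp h2)

/-- The map sending a Lyndon word `λ` of length `n` to the minimal polynomial of
`γ(λ) = ∑ λ i • α^{q^i}` is a bijection onto the monic irreducible polynomials of
degree `n` over `F_q`. -/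
theorem stmt4 {F E : Type*} [Field F] [Fintype F] [LinearOrder F] [Field E] [Algebra F E]
    (n : ℕ) (hn : 0 < n) (hdim : Module.finrank F E = n)
    (α : E) (b : Module.Basis (Fin n) F E)
    (hb : ∀ i : Fin n, b i = α ^ (Fintype.card F) ^ (i : ℕ)) :
    Set.BijOn
      (fun lam : Fin n → F =>
        minpoly F (∑ i : Fin n, lam i • α ^ (Fintype.card F) ^ (i : ℕ)))
      {lam : Fin n → F | IsLyndonWord lam}
      {p : Polynomial F | p.Monic ∧ Irreducible p ∧ p.natDegree = n} := by
  classical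
  haveI : NeZero n := ⟨hn.ne'⟩
  set q := Fintype.card F with hqdef
  have hq1 : 1 < q := Fintype.one_lt_card
  haveI : FiniteDimensional F E := Module.Finite.of_basis b
  letI : Fintype E := Fintype.ofEquiv _ b.equivFun.toEquiv.symm
  have cardE : Fintype.card E = q ^ n := by
    rw [Fintype.card_congr b.equivFun.toEquiv, Fintype.card_fun, Fintype.card_fin, hqdef]
  have powE : ∀ x : E, x ^ q ^ n = x := by
    intro x; rw [← cardE]; exact FiniteField.pow_card x
  -- characteristic
  set p := ringChar F with hpdef
  haveI : CharP F p := ringChar.charP F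
  obtain ⟨m, hpprime, hcard⟩ := FiniteField.card F p
  haveI : Fact p.Prime := ⟨hpprime⟩
  haveI : CharP E p := charP_of_injective_algebraMap (algebraMap F E).injective p
  have hqpow : ∀ k : ℕ, q ^ k = p ^ ((m : ℕ) * k) := by
    intro k; rw [hqdef, hcard, ← pow_mul]
  -- Frobenius iterates as F-algebra homomorphisms
  have hq0 : q ≠ 0 := by omega
  let φ : ℕ → (E →ₐ[F] E) := fun k =>
    { toFun := fun x => x ^ q ^ k
      map_one' := one_pow _
      map_mul' := fun x y => mul_pow x y _
      map_zero' := zero_pow (pow_ne_zero _ hq0)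
      map_add' := fun x y => by
        simp only [hqpow k]; exact add_pow_char_pow x y p ((m : ℕ) * k)
      commutes' := fun c => by
        show (algebraMap F E c) ^ q ^ k = algebraMap F E c
        rw [← map_pow, hqdef, FiniteField.pow_card_pow] }
  have φapp : ∀ (k : ℕ) (x : E), φ k x = x ^ q ^ k := fun _ _ => rfl
  have φinj : ∀ k : ℕ, Function.Injective (φ k) := fun k => (φ k).toRingHom.injective
  -- the coordinate map γ
  set γ : (Fin n → F) → E := fun lam => ∑ i : Fin n, lam i • α ^ q ^ (i : ℕ) with hγdef
  have hγ : ∀ lam, γ lam = b.equivFun.symm lam := by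
    intro lam
    rw [Module.Basis.equivFun_symm_apply]
    exact Finset.sum_congr rfl fun i _ => by rw [hb i]
  have γeq : γ = ⇑(b.equivFun.symm) := funext hγ
  have γbij : Function.Bijective γ := by rw [γeq]; exact b.equivFun.symm.bijective
  -- exponents mod n
  have Lmod : ∀ (x : E) (a : ℕ), x ^ q ^ (a % n) = x ^ q ^ a := by
    intro x a
    induction a using Nat.strong_induction_on with
    | _ a ih =>
      rcases lt_or_ge a n with h | h
      · rw [Nat.mod_eq_of_lt h]
      · have h1 : a % n = (a - n) % n := (Nat.mod_eq_sub_mod h).symm ▸ rfl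
        have h2 : a = (a - n) + n := by omega
        rw [h1, ih (a - n) (by omega)]
        conv_rhs => rw [h2, pow_add, pow_mul, powE]
  -- rotation
  set rot : Fin n → (Fin n → F) → (Fin n → F) := fun k lam i => lam (i - k) with hrotdef
  have key : ∀ (lam : Fin n → F) (k : Fin n), (γ lam) ^ q ^ (k : ℕ) = γ (rot k lam) := by
    intro lam k
    calc (γ lam) ^ q ^ (k : ℕ) = φ (k : ℕ) (γ lam) := rfl
    _ = ∑ i : Fin n, lam i • (α ^ q ^ (i : ℕ)) ^ q ^ (k : ℕ) := by
        simp only [hγdef, map_sum, map_smul]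
        exact Finset.sum_congr rfl fun i _ => by rw [φapp]
    _ = ∑ i : Fin n, lam i • α ^ q ^ (((i + k : Fin n) : ℕ)) := by
        refine Finset.sum_congr rfl fun i _ => ?_
        rw [← pow_mul, ← pow_add, Fin.val_add, Lmod]
    _ = ∑ i : Fin n, (rot k lam) i • α ^ q ^ (i : ℕ) :=
        Fintype.sum_equiv (Equiv.addRight k) _ _ fun i => by
          simp only [hrotdef, Equiv.coe_addRight, add_sub_cancel_right]
    _ = γ (rot k lam) := rfl
  -- rotation algebra
  have rot_rot : ∀ (k k' : Fin n) (lam : Fin n → F), rot k (rot k' lam) = rot (k + k') lam := by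
    intro k k' lam; funext i; simp only [rot, sub_sub]
  have rot_zero : ∀ lam : Fin n → F, rot 0 lam = lam := by
    intro lam; funext i; simp only [rot, sub_zero]
  have rot_add_form : ∀ (k : Fin n) (lam : Fin n → F), (fun i => lam (i + k)) = rot (-k) lam := by
    intro k lam; funext i; simp only [rot, sub_neg_eq_add]
  have val_ne : ∀ k : Fin n, k ≠ 0 ↔ (k : ℕ) ≠ 0 := fun k => by
    exact Fin.val_ne_zero_iff.symm
  -- Lyndon words are aperiodic
  have lyndon_ne : ∀ lam : Fin n → F, IsLyndonWord lam → ∀ k : Fin n, k ≠ 0 →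
      rot k lam ≠ lam := by
    intro lam hl k hk h
    have hk' : (k : ℕ) ≠ 0 := (val_ne k).mp hk
    have hll := hl k hk'
    rw [rot_add_form] at hll
    have h2 : rot (-k) lam = lam := by
      have h3 := congrArg (rot (-k)) h
      rw [rot_rot, neg_add_cancel, rot_zero] at h3
      exact h3.symm
    rw [h2] at hll
    exact lexLt_irrefl lam hll
  have rot_inj : ∀ lam : Fin n → F, (∀ k : Fin n, k ≠ 0 → rot k lam ≠ lam) →
      ∀ k k' : Fin n, rot k lam = rot k' lam → k = k' := by
    intro lam hap k k' h
    by_contra hne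
    apply hap (k - k') (by
      intro h0
      exact hne (by rwa [sub_eq_zero] at h0))
    have := congrArg (rot (-k')) h
    rwa [rot_rot, rot_rot, neg_add_cancel, rot_zero, ← sub_eq_neg_add] at this
  -- conjugates are roots of the minimal polynomial
  have hint : ∀ x : E, IsIntegral F x := fun x => IsIntegral.of_finite F x
  have conj_root : ∀ (x : E) (k : ℕ), Polynomial.aeval (x ^ q ^ k) (minpoly F x) = 0 := by
    intro x k
    have h1 : x ^ q ^ k = φ k x := rfl
    rw [h1, Polynomial.aeval_algHom_apply, minpoly.aeval, map_zero]
  -- main structural fact for aperiodic words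
  have main : ∀ lam : Fin n → F, (∀ k : Fin n, k ≠ 0 → rot k lam ≠ lam) →
      (minpoly F (γ lam)).natDegree = n ∧
      ((minpoly F (γ lam)).map (algebraMap F E)).roots.toFinset
        = Finset.image (fun k : Fin n => γ (rot k lam)) Finset.univ := by
    intro lam hap
    set P := minpoly F (γ lam) with hP
    have hP0 : P ≠ 0 := minpoly.ne_zero (hint _)
    have hPm0 : P.map (algebraMap F E) ≠ 0 :=
      (Polynomial.map_ne_zero_iff (algebraMap F E).injective).mpr hP0
    set S := Finset.image (fun k : Fin n => γ (rot k lam)) Finset.univ with hS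
    have hinj2 : Function.Injective (fun k : Fin n => γ (rot k lam)) := by
      intro k k' h
      exact rot_inj lam hap k k' (γbij.1 h)
    have hcardS : S.card = n := by
      rw [hS, Finset.card_image_of_injective _ hinj2, Finset.card_univ, Fintype.card_fin]
    have hsub : S ⊆ (P.map (algebraMap F E)).roots.toFinset := by
      intro x hx
      rw [hS, Finset.mem_image] at hx
      obtain ⟨k, -, rfl⟩ := hx
      rw [Multiset.mem_toFinset, Polynomial.mem_roots hPm0]
      show (P.map (algebraMap F E)).IsRoot (γ (rot k lam))
      rw [Polynomial.IsRoot.def, Polynomial.eval_map, ← Polynomial.aeval_def, ← key lam k]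
      exact conj_root (γ lam) (k : ℕ)
    have hmapdeg : (P.map (algebraMap F E)).natDegree = P.natDegree :=
      Polynomial.natDegree_map_eq_of_injective (algebraMap F E).injective P
    have hdeg_le : P.natDegree ≤ n := by
      have h : (minpoly F (γ lam)).natDegree ≤ Module.finrank F E := minpoly.natDegree_le (γ lam)
      rwa [hdim] at h
    have hdeg_ge : n ≤ P.natDegree := by
      calc n = S.card := hcardS.symm
      _ ≤ (P.map (algebraMap F E)).roots.toFinset.card := Finset.card_le_card hsub
      _ ≤ Multiset.card (P.map (algebraMap F E)).roots := Multiset.toFinset_card_le _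
      _ ≤ (P.map (algebraMap F E)).natDegree := Polynomial.card_roots' _
      _ = P.natDegree := hmapdeg
    have hdeg : P.natDegree = n := le_antisymm hdeg_le hdeg_ge
    refine ⟨hdeg, ?_⟩
    refine (Finset.eq_of_subset_of_card_le hsub ?_).symm
    rw [hcardS]
    calc (P.map (algebraMap F E)).roots.toFinset.card
        ≤ Multiset.card (P.map (algebraMap F E)).roots := Multiset.toFinset_card_le _
      _ ≤ (P.map (algebraMap F E)).natDegree := Polynomial.card_roots' _
      _ = n := by rw [hmapdeg, hdeg]
  refine ⟨?_, ?_, ?_⟩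
  · -- MapsTo
    intro lam hlam
    have hap := lyndon_ne lam hlam
    obtain ⟨hdeg, -⟩ := main lam hap
    exact ⟨minpoly.monic (hint _), minpoly.irreducible (hint _), hdeg⟩
  · -- InjOn
    intro lam hlam mu hmu heq
    have haplam := lyndon_ne lam hlam
    obtain ⟨hdeg, hroots⟩ := main lam haplam
    have heq' : minpoly F (γ lam) = minpoly F (γ mu) := heq
    have hPm0 : (minpoly F (γ lam)).map (algebraMap F E) ≠ 0 :=
      (Polynomial.map_ne_zero_iff (algebraMap F E).injective).mpr (minpoly.ne_zero (hint _))
    have hroot : γ mu ∈ ((minpoly F (γ lam)).map (algebraMap F E)).roots.toFinset := by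
      rw [Multiset.mem_toFinset, Polynomial.mem_roots hPm0, Polynomial.IsRoot.def,
        Polynomial.eval_map, ← Polynomial.aeval_def, heq']
      exact minpoly.aeval F (γ mu)
    rw [hroots, Finset.mem_image] at hroot
    obtain ⟨k, -, hk⟩ := hroot
    have hmueq : mu = rot k lam := (γbij.1 hk).symm
    by_cases hk0 : k = 0
    · rw [hk0, rot_zero] at hmueq
      exact hmueq.symm
    · exfalso
      have h1 : lexLt lam mu := by
        have h := hlam (-k) ((val_ne _).mp (neg_ne_zero.mpr hk0))
        rw [rot_add_form, neg_neg, ← hmueq] at h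
        exact h
      have h2 : lexLt mu lam := by
        have h := hmu k ((val_ne _).mp hk0)
        rw [rot_add_form, hmueq, rot_rot, neg_add_cancel, rot_zero] at h
        rw [← hmueq] at h
        exact h
      exact lexLt_asymm h1 h2
  · -- SurjOn
    rintro P ⟨hmonic, hirr, hdegP⟩
    haveI : Fact (Irreducible P) := ⟨hirr⟩
    have hP0 : P ≠ 0 := hmonic.ne_zero
    -- P has a root in E
    obtain ⟨β, hβP⟩ : ∃ β : E, Polynomial.aeval β P = 0 := by
      let pb := AdjoinRoot.powerBasis hP0
      haveI : Module.Finite F (AdjoinRoot P) := pb.finite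
      letI : Fintype (AdjoinRoot P) := Fintype.ofEquiv _ pb.basis.equivFun.toEquiv.symm
      have hcardK : Fintype.card (AdjoinRoot P) = q ^ n := by
        rw [Fintype.card_congr pb.basis.equivFun.toEquiv, Fintype.card_fun, Fintype.card_fin,
          hqdef, AdjoinRoot.powerBasis_dim, hdegP]
      have hxq : (AdjoinRoot.root P) ^ q ^ n = AdjoinRoot.root P := by
        rw [← hcardK]; exact FiniteField.pow_card _
      have h1 : Polynomial.aeval (AdjoinRoot.root P) P = 0 := by
        rw [AdjoinRoot.aeval_eq, AdjoinRoot.mk_self]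
      have h2 : minpoly F (AdjoinRoot.root P) = P :=
        (minpoly.eq_of_irreducible_of_monic hirr h1 hmonic).symm
      have hdvd : P ∣ (Polynomial.X ^ q ^ n - Polynomial.X : Polynomial F) := by
        rw [← h2]
        apply minpoly.dvd
        rw [map_sub, map_pow, Polynomial.aeval_X, hxq, sub_self]
      have hdvdE : P.map (algebraMap F E) ∣
          (Polynomial.X ^ Fintype.card E - Polynomial.X : Polynomial E) := by
        have h3 := Polynomial.map_dvd (algebraMap F E) hdvd
        rwa [Polynomial.map_sub, Polynomial.map_pow, Polynomial.map_X, ← cardE] at h3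
      have hsplit : ((Polynomial.X : Polynomial E) ^ Fintype.card E - Polynomial.X).Splits := by
        rw [Polynomial.splits_iff_card_roots, FiniteField.roots_X_pow_card_sub_X,
          FiniteField.X_pow_card_sub_X_natDegree_eq E Fintype.one_lt_card]
        exact Finset.card_univ
      have hsplit2 := Polynomial.Splits.of_dvd hsplit
        (FiniteField.X_pow_card_sub_X_ne_zero E Fintype.one_lt_card) hdvdE
      have hdeg0 : (P.map (algebraMap F E)).degree ≠ 0 := by
        rw [Polynomial.degree_map, Polynomial.degree_eq_natDegree hP0, hdegP]
        exact_mod_cast hn.ne'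
      obtain ⟨β, hβ⟩ := Polynomial.Splits.exists_eval_eq_zero hsplit2 hdeg0
      refine ⟨β, ?_⟩
      rw [Polynomial.aeval_def, Polynomial.eval₂_eq_eval_map]
      exact hβ
    have minβ : minpoly F β = P := (minpoly.eq_of_irreducible_of_monic hirr hβP hmonic).symm
    set lam0 := b.equivFun β with hlam0
    have hγlam0 : γ lam0 = β := by rw [γeq, hlam0]; exact b.equivFun.symm_apply_apply β
    have hap : ∀ k : Fin n, k ≠ 0 → rot k lam0 ≠ lam0 := by
      intro k hk0 hrk
      have hfix : φ (k : ℕ) β = β := by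
        rw [φapp, ← hγlam0, key, hrk, hγlam0]
      have hintβ : IsIntegral F β := hint β
      have htop : IntermediateField.adjoin F {β} = ⊤ := by
        apply IntermediateField.eq_of_le_of_finrank_le le_top
        rw [IntermediateField.finrank_top', IntermediateField.adjoin.finrank hintβ, minβ, hdegP,
          hdim]
      have htopA : Algebra.adjoin F {β} = ⊤ := by
        rw [← IntermediateField.adjoin_simple_toSubalgebra_of_isAlgebraic hintβ.isAlgebraic, htop,
          IntermediateField.top_toSubalgebra]
      have hle : (⊤ : Subalgebra F E) ≤ AlgHom.equalizer (φ (k : ℕ)) (AlgHom.id F E) := by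
        rw [← htopA]
        exact Algebra.adjoin_le (Set.singleton_subset_iff.mpr
          ((AlgHom.mem_equalizer _ _ β).mpr hfix))
      have hα : α ^ q ^ (k : ℕ) = α := by
        have h4 : α ∈ AlgHom.equalizer (φ (k : ℕ)) (AlgHom.id F E) :=
          hle (Algebra.mem_top (R := F))
        exact (AlgHom.mem_equalizer (φ (k : ℕ)) (AlgHom.id F E) α).mp h4
      have hbk : b k = b 0 := by
        rw [hb k, hb 0]
        simp only [Fin.val_zero, pow_zero, pow_one]
        exact hα
      exact hk0 (b.injective hbk)
    -- choose the lexicographically smallest rotation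
    obtain ⟨k0, hmin⟩ : ∃ k0 : Fin n, ∀ k : Fin n, ¬ lexLt (rot k lam0) (rot k0 lam0) := by
      obtain ⟨ml, hml, hminml'⟩ := Finset.exists_minimal
        (s := Finset.univ.image (fun k : Fin n => toLex (rot k lam0)))
        ⟨toLex (rot 0 lam0), Finset.mem_image_of_mem _ (Finset.mem_univ 0)⟩
      have hminml : ∀ x ∈ Finset.univ.image (fun k : Fin n => toLex (rot k lam0)), ¬ x < ml :=
        fun x hx hlt => hlt.not_ge (hminml' hx hlt.le)
      rw [Finset.mem_image] at hml
      obtain ⟨k0, -, hk0⟩ := hml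
      refine ⟨k0, fun k hlt => ?_⟩
      refine hminml (toLex (rot k lam0)) (Finset.mem_image_of_mem _ (Finset.mem_univ k)) ?_
      rw [← hk0]
      exact hlt
    refine ⟨rot k0 lam0, ?_, ?_⟩
    · -- Lyndon
      intro k hk
      have hk0 : k ≠ 0 := (val_ne k).mpr hk
      have hform : (fun i => rot k0 lam0 (i + k)) = rot (k0 - k) lam0 := by
        rw [rot_add_form k (rot k0 lam0), rot_rot, ← sub_eq_neg_add]
      have hne : rot k0 lam0 ≠ rot (k0 - k) lam0 := by
        intro h
        have h6 := (rot_inj lam0 hap _ _ h).symm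
        rw [sub_eq_iff_eq_add, left_eq_add] at h6
        exact hk0 h6
      rw [hform]
      rcases lexLt_trichotomy (rot k0 lam0) (rot (k0 - k) lam0) with h | h | h
      · exact h
      · exact absurd h hne
      · exact absurd h (hmin (k0 - k))
    · -- correct minimal polynomial
      show minpoly F (∑ i : Fin n, rot k0 lam0 i • α ^ q ^ (i : ℕ)) = P
      have h7 : (∑ i : Fin n, rot k0 lam0 i • α ^ q ^ (i : ℕ)) = γ (rot k0 lam0) := rfl
      rw [h7, ← key lam0 k0]
      have h8 : (γ lam0) ^ q ^ ((k0 : Fin n) : ℕ) = φ ((k0 : Fin n) : ℕ) (γ lam0) := rfl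
      rw [h8, minpoly.algHom_eq (φ ((k0 : Fin n) : ℕ)) (φinj _), hγlam0, minβ]
end

section
/- Let w be a Lyndon word of length m < n over Σ = {0 < 1 < ⋯ < q−1} that is not equal to (q−1)^m. Define D(w) to be the length-n word w^h w' where w' is the prefix of w of length n mod m (and h = ⌈n/m⌉ adjusted accordingly), and if D(w) = u·b·(q−1)^t with b ≠ q−1 then define N(w) = u·(b+1). Then |N(w)| > |w|. -/
/-- A word is a Lyndon word if it is strictly lexicographically smaller than all its
nontrivial cyclic rotations. -/
def IsLyndonList {A : Type*} [LinearOrder A] (w : List A) : Prop :=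
  ∀ i, 0 < i → i < w.length → w < w.rotate i

lemma cons_lt_cons_head {q : ℕ} (x y : Fin q) (l₁ l₂ : List (Fin q))
    (h : (x::l₁) < (y::l₂)) : x ≤ y := by
  cases h with
  | cons _ => exact le_refl _
  | rel h => exact le_of_lt h

/-- Duval's step increases length: if `w` is a Lyndon word of length `m < n`,
`w ≠ (q-1)^m`, `D(w)` is the length-`n` prefix of `w^∞`, and
`D(w) = u·b·(q-1)^t` with `b ≠ q-1`, then `N(w) = u·(b+1)` has length `> m`. -/
theorem stmt7 (q n m : ℕ) (hq : 0 < q) (hm : 0 < m) (hmn : m < n)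
    (w : List (Fin q)) (hwlen : w.length = m) (hw : IsLyndonList w)
    (hwne : w ≠ List.replicate m (⟨q - 1, by omega⟩ : Fin q))
    (u : List (Fin q)) (b : Fin q) (t : ℕ) (hb : (b : ℕ) ≠ q - 1)
    (hD : ((List.replicate n w).flatten).take n =
        u ++ [b] ++ List.replicate t (⟨q - 1, by omega⟩ : Fin q)) :
    m < (u ++ [(⟨(b : ℕ) + 1, by have := b.isLt; omega⟩ : Fin q)]).length := by
  by_contra hcon
  push_neg at hcon
  rw [List.length_append, List.length_singleton] at hcon
  set k := u.length with hk
  have hkm : k + 1 ≤ m := hcon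
  obtain ⟨r, hr⟩ : ∃ r, (List.replicate n w).flatten = w ++ (w ++ r) := by
    refine ⟨(List.replicate (n-2) w).flatten, ?_⟩
    have h2 : n = 2 + (n-2) := by omega
    rw [h2, List.replicate_add]
    simp
  have hnm : n ≤ n * m := Nat.le_mul_of_pos_right n hm
  have hflen : ((List.replicate n w).flatten).length = n * m := by
    simp [List.length_flatten, hwlen, List.map_replicate, List.sum_replicate,
      smul_eq_mul, Nat.mul_comm]
  have htlen : (((List.replicate n w).flatten).take n).length = n := by
    rw [List.length_take, hflen]; omega
  have hlen : n = k + 1 + t := by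
    have := congrArg List.length hD
    rw [htlen] at this
    simp [List.length_append, List.length_replicate] at this
    omega
  have hkw : k < w.length := by omega
  have e1 : w[k]'hkw = b := by
    have hki : k < (((List.replicate n w).flatten).take n).length := by omega
    have h1 := List.getElem_of_eq hD hki
    rw [List.getElem_take] at h1
    simp only [hr] at h1
    rw [List.getElem_append_left hkw] at h1
    rw [h1, List.getElem_append_left (by simp [hk]), List.getElem_append_right (le_refl _)]
    simp
  have e2 : w[0]'(by omega) = (⟨q - 1, by omega⟩ : Fin q) := by
    have hmi : m < (((List.replicate n w).flatten).take n).length := by omega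
    have h1 := List.getElem_of_eq hD hmi
    rw [List.getElem_take] at h1
    simp only [hr] at h1
    rw [List.getElem_append_right (by omega)] at h1
    rw [List.getElem_append_left (by omega)] at h1
    simp only [hwlen, Nat.sub_self] at h1
    rw [h1, List.getElem_append_right (by simp [hk]; omega)]
    rw [List.getElem_replicate]
  rcases Nat.eq_zero_or_pos k with hk0 | hk0
  · simp only [hk0] at e1
    rw [e2] at e1
    exact hb (congrArg Fin.val e1).symm
  · have hlt := hw k hk0 hkw
    rw [List.rotate_eq_drop_append_take (by omega)] at hlt
    have hd1 : w.drop k = w[k]'hkw :: w.drop (k+1) := List.drop_eq_getElem_cons hkw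
    have hd0 : w = w[0]'(by omega) :: w.drop 1 := by
      simpa using List.drop_eq_getElem_cons (l := w) (i := 0) (by omega)
    rw [hd1, List.cons_append] at hlt
    nth_rewrite 1 [hd0] at hlt
    have := cons_lt_cons_head _ _ _ _ hlt
    rw [e1, e2] at this
    have hbv := b.isLt
    have : q - 1 ≤ (b : ℕ) := this
    omega
end

section
/- In Duval's successor step: if w = u·b·(q−1)^t is a Lyndon word of length n with b ≠ q−1 and t ≥ 1, then u·(b+1) is also a Lyndon word. -/
variable {α : Type*} [LinearOrder α]

lemma getElem_idx_congr {β : Type*} {l : List β} {a b : ℕ} (h : a = b) (ha : a < l.length) :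
    l[a] = l[b]'(h ▸ ha) := by subst h; rfl

lemma lex_of_firstdiff : ∀ {x y : List α} (j : ℕ) (hx : j < x.length) (hy : j < y.length),
    (∀ k (hk : k < j), x[k]'(by omega) = y[k]'(by omega)) → x[j] < y[j] →
    List.Lex (· < ·) x y
  | a :: x, b :: y, 0, hx, hy, heq, hlt => List.Lex.rel hlt
  | a :: x, b :: y, j+1, hx, hy, heq, hlt => by
    have h0 : a = b := heq 0 (by omega)
    subst h0
    exact List.Lex.cons (lex_of_firstdiff j (by simpa using hx) (by simpa using hy)
      (fun k hk => heq (k+1) (by omega)) hlt)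

lemma lex_firstdiff : ∀ {x y : List α}, List.Lex (· < ·) x y → y.length ≤ x.length →
    ∃ j, ∃ (hx : j < x.length) (hy : j < y.length),
      (∀ k (hk : k < j), x[k]'(by omega) = y[k]'(by omega)) ∧ x[j] < y[j] := by
  intro x y h
  induction h with
  | nil => intro hlen; simp at hlen
  | @rel a l₁ b l₂ hab => intro _; exact ⟨0, by simp, by simp, by simp, hab⟩
  | @cons a l₁ l₂ h ih =>
    intro hlen
    obtain ⟨j, hx, hy, heq, hlt⟩ := ih (by simpa using hlen)
    exact ⟨j+1, by simpa using hx, by simpa using hy,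
      fun k hk => by cases k with
        | zero => rfl
        | succ k => exact heq k (by omega), hlt⟩

lemma lyndon_key {w : List α} (hw : IsLyndonList w) {i : ℕ} (hi : 0 < i)
    (hin : i < w.length) :
    ∃ j, ∃ (hj : j + i < w.length),
      (∀ k (hk : k < j), w[k]'(by omega) = w[k+i]'(by omega)) ∧ w[j]'(by omega) < w[j+i] := by
  set n := w.length with hn
  have h1 : List.Lex (· < ·) w (w.rotate i) := hw i hi hin
  obtain ⟨j, hx, hy, heq, hlt⟩ := lex_firstdiff h1 (by simp)
  rw [List.getElem_rotate] at hlt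
  by_cases hcase : j + i < n
  · refine ⟨j, hcase, fun k hk => ?_, ?_⟩
    · have := heq k hk
      rw [List.getElem_rotate] at this
      rwa [getElem_idx_congr (Nat.mod_eq_of_lt (by omega))] at this
    · rwa [getElem_idx_congr (Nat.mod_eq_of_lt (by omega))] at hlt
  · exfalso
    push_neg at hcase
    have hjn : j < n := hx
    have hmod : (j + i) % n = j + i - n := by
      rw [Nat.mod_eq_sub_mod (by omega)]
      exact Nat.mod_eq_of_lt (by omega)
    rw [getElem_idx_congr hmod] at hlt
    set p := j + i - n with hp
    have hpi : p < i := by omega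
    have h2 : List.Lex (· < ·) w (w.rotate (n - i)) := hw (n - i) (by omega) (by omega)
    have h3 : List.Lex (· < ·) (w.rotate (n - i)) w := by
      have hplen : p < (w.rotate (n - i)).length := by
        rw [List.length_rotate]; omega
      apply lex_of_firstdiff p hplen (by omega)
      · intro k hk
        rw [List.getElem_rotate,
          getElem_idx_congr (show (k + (n - i)) % n = k + (n - i) from
            Nat.mod_eq_of_lt (by omega))]
        have := heq (k + (n - i)) (by omega)
        rw [List.getElem_rotate] at this
        rw [getElem_idx_congr (show (k + (n - i) + i) % n = k by
          have h5 : k + (n - i) + i = k + n := by omega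
          rw [h5]; simp [Nat.add_mod, Nat.mod_eq_of_lt (show k < n by omega)])] at this
        exact this
      · rw [List.getElem_rotate]
        rw [getElem_idx_congr (show (p + (n - i)) % n = j by
          have h5 : p + (n - i) = j := by omega
          rw [h5]; exact Nat.mod_eq_of_lt (by omega))]
        exact hlt
    exact asymm h2 h3


lemma duval_aux {α : Type*} [LinearOrder α] (u : List α) (hu : u ≠ []) (b c : α)
    (hbc : b < c) (R : List α) (hw : IsLyndonList (u ++ [b] ++ R)) :
    IsLyndonList (u ++ [c]) := by
  intro i hi hiv
  rw [List.length_append, List.length_singleton] at hiv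
  have hm0 : 0 < u.length := List.length_pos_iff.mpr hu
  have hwu : ∀ k (hk : k < u.length),
      (u ++ [b] ++ R)[k]'(by simp; omega) = u[k]'hk := by
    intro k hk
    rw [List.getElem_append_left (by simp; omega), List.getElem_append_left hk]
  have hwm : (u ++ [b] ++ R)[u.length]'(by simp) = b := by
    rw [List.getElem_append_left (by simp)]
    exact List.getElem_concat_length (l := u) (a := b) (i := u.length) rfl (by simp)
  have hvu : ∀ k (hk : k < u.length), (u ++ [c])[k]'(by simp; omega) = u[k]'hk := by
    intro k hk
    rw [List.getElem_append_left hk]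
  have hvm : (u ++ [c])[u.length]'(by simp) = c :=
    List.getElem_concat_length (l := u) (a := c) (i := u.length) rfl (by simp)
  obtain ⟨j, hj, heq, hlt⟩ := lyndon_key hw hi (by simp; omega)
  rw [List.length_append, List.length_append, List.length_singleton] at hj
  show List.Lex (· < ·) _ _
  by_cases hcase : j + i ≤ u.length
  · apply lex_of_firstdiff j (by simp; omega) (by rw [List.length_rotate]; simp; omega)
    · intro k hk
      rw [List.getElem_rotate,
        getElem_idx_congr (show (k + i) % (u ++ [c]).length = k + i from by
          rw [List.length_append, List.length_singleton]
          exact Nat.mod_eq_of_lt (by omega))]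
      rw [hvu k (by omega), hvu (k + i) (by omega)]
      have := heq k hk
      rw [hwu k (by omega), hwu (k + i) (by omega)] at this
      exact this
    · rw [List.getElem_rotate,
        getElem_idx_congr (show (j + i) % (u ++ [c]).length = j + i from by
          rw [List.length_append, List.length_singleton]
          exact Nat.mod_eq_of_lt (by omega))]
      rw [hvu j (by omega)]
      have h1 : u[j]'(by omega) < (u ++ [b] ++ R)[j + i]'(by simp; omega) := by
        rw [← hwu j (by omega)]; exact hlt
      rcases lt_or_eq_of_le hcase with hji | hji
      · rw [hvu (j + i) (by omega)]
        rwa [hwu (j + i) (by omega)] at h1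
      · rw [getElem_idx_congr hji, hvm]
        rw [getElem_idx_congr hji, hwm] at h1
        exact h1.trans hbc
  · push_neg at hcase
    have hp : u.length - i + i = u.length := by omega
    apply lex_of_firstdiff (u.length - i) (by simp)
      (by rw [List.length_rotate]; simp)
    · intro k hk
      rw [List.getElem_rotate,
        getElem_idx_congr (show (k + i) % (u ++ [c]).length = k + i from by
          rw [List.length_append, List.length_singleton]
          exact Nat.mod_eq_of_lt (by omega))]
      rw [hvu k (by omega), hvu (k + i) (by omega)]
      have := heq k (by omega)
      rw [hwu k (by omega), hwu (k + i) (by omega)] at this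
      exact this
    · rw [List.getElem_rotate,
        getElem_idx_congr (show (u.length - i + i) % (u ++ [c]).length = u.length from by
          rw [List.length_append, List.length_singleton, hp]
          exact Nat.mod_eq_of_lt (by omega)), hvm]
      rw [hvu (u.length - i) (by omega)]
      have := heq (u.length - i) (by omega)
      rw [hwu (u.length - i) (by omega), getElem_idx_congr hp, hwm] at this
      rw [this]
      exact hbc


/-- Duval's successor step: if `w = u·b·(q-1)^t` is a Lyndon word of length `n` with
`b ≠ q-1` and `t ≥ 1`, then `u·(b+1)` is also a Lyndon word. -/
theorem stmt8 (q n : ℕ) (hq : 0 < q) (u : List (Fin q)) (hu : u ≠ [])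
    (b : Fin q) (hb : (b : ℕ) ≠ q - 1) (t : ℕ) (ht : 1 ≤ t)
    (hlen : (u ++ [b] ++ List.replicate t (⟨q - 1, by omega⟩ : Fin q)).length = n)
    (hw : IsLyndonList (u ++ [b] ++ List.replicate t (⟨q - 1, by omega⟩ : Fin q))) :
    IsLyndonList (u ++ [(⟨(b : ℕ) + 1, by have := b.isLt; omega⟩ : Fin q)]) := by
  exact duval_aux u hu b _ (Fin.mk_lt_mk.mpr (by omega)) _ hw
end

section
/- If w = u·(q−2) is a Lyndon word of length n over Σ = {0 < 1 < ⋯ < q−1} with q ≥ 2, then u·(q−1) is also a Lyndon word. -/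
/-- Key lemma: if `u ++ [a]` is lex-smaller than `d ++ a :: t` (with `d` shorter than `u`),
then the same holds with `a` replaced by any larger letter `b`. -/
lemma key_lyndon_subst {α : Type*} [LinearOrder α] (a b : α) (hab : a < b) :
    ∀ (d u t : List α), d.length < u.length →
      List.Lex (· < ·) (u ++ [a]) (d ++ a :: t) →
      List.Lex (· < ·) (u ++ [b]) (d ++ b :: t) := by
  intro d
  induction d with
  | nil =>
    intro u t hlen h
    match u with
    | c :: u' =>
      cases h with
      | rel h' => exact List.Lex.rel (h'.trans hab)
      | cons h' => exact List.Lex.rel hab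
  | cons e d' ih =>
    intro u t hlen h
    match u with
    | c :: u' =>
      cases h with
      | rel h' => exact List.Lex.rel h'
      | cons h' =>
        exact List.Lex.cons (ih u' t (by simpa using Nat.lt_of_succ_lt_succ (by simpa using hlen)) h')

/-- If `w = u·(q-2)` is a Lyndon word of length `n` then `u·(q-1)` is also Lyndon. -/
theorem stmt9 (q n : ℕ) (hq : 2 ≤ q) (u : List (Fin q)) (hu : u ≠ [])
    (hlen : (u ++ [(⟨q - 2, by omega⟩ : Fin q)]).length = n)
    (hw : IsLyndonList (u ++ [(⟨q - 2, by omega⟩ : Fin q)])) :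
    IsLyndonList (u ++ [(⟨q - 1, by omega⟩ : Fin q)]) := by
  set a : Fin q := ⟨q - 2, by omega⟩ with ha
  set b : Fin q := ⟨q - 1, by omega⟩ with hb
  have hab : a < b := by
    simp [ha, hb, Fin.lt_def]; omega
  intro i hi hilt
  have hul : 0 < u.length := List.length_pos_iff.mpr hu
  have hile : i ≤ u.length := by
    simp [List.length_append] at hilt; omega
  have h1 := hw i hi (by simp [List.length_append]; omega)
  rw [List.rotate_eq_drop_append_take (by simp; omega)] at h1 ⊢
  rw [List.drop_append_of_le_length hile, List.take_append_of_le_length hile] at h1 ⊢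
  have h2 : List.Lex (· < ·) (u ++ [a]) (u.drop i ++ a :: u.take i) := by
    have : List.Lex (· < ·) (u ++ [a]) (List.drop i u ++ [a] ++ List.take i u) := h1
    simpa using this
  have h3 := key_lyndon_subst a b hab (u.drop i) u ((u.take i)) (by simp; omega) h2
  show List.Lex (· < ·) _ _
  simpa using h3
end

section
/- For t ≥ 1, the number ℓ_{n,t} of Lyndon words of length n over a q-letter ordered alphabet that end with exactly t copies of the maximal symbol (i.e., of the form u·b·(q−1)^t with b ≠ q−1) is at most ℓ_{n−t}, the number of Lyndon words of length n−t. -/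
open List

/-- Key comparison lemma: if `x ++ b :: R` is lex-smaller than `d ++ b :: (R ++ z)`
with `d` shorter than `x`, then after replacing `b` by a larger letter `b'` (and
arbitrary continuations), the comparison persists. -/
lemma lex_key {α : Type*} [LinearOrder α] :
    ∀ (d x : List α), d.length < x.length → ∀ (b b' : α), b < b' → ∀ (R z tk : List α),
      List.Lex (· < ·) (x ++ b :: R) (d ++ b :: (R ++ z)) →
      List.Lex (· < ·) (x ++ [b']) (d ++ b' :: tk) := by
  intro d
  induction d with
  | nil =>
    intro x hlen b b' hb R z tk h
    match x with
    | c :: x' =>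
      have hcb : c ≤ b := by
        cases h with
        | cons h => exact le_refl _
        | rel h => exact h.le
      exact List.Lex.rel (lt_of_le_of_lt hcb hb)
  | cons a d' ih =>
    intro x hlen b b' hb R z tk h
    match x with
    | c :: x' =>
      cases h with
      | cons h =>
        exact List.Lex.cons (ih x' (by simpa using Nat.lt_of_succ_lt_succ hlen) b b' hb R z tk h)
      | rel h => exact List.Lex.rel h

/-- If `u ++ b :: replicate t m` is Lyndon and `b < b'`, then `u ++ [b']` is Lyndon. -/
lemma lyndon_shorten {α : Type*} [LinearOrder α] (u : List α) (b b' m : α) (hb : b < b')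
    (t : ℕ) (hw : IsLyndonList (u ++ b :: List.replicate t m)) :
    IsLyndonList (u ++ [b']) := by
  intro i hi hilen
  have hik : i ≤ u.length := by simpa using Nat.lt_succ_iff.mp (by simpa using hilen)
  have hw' : List.Lex (· < ·) _ _ := hw i hi (by simp; omega)
  have h1 : (u ++ [b']).rotate i = (u.drop i ++ b' :: u.take i) := by
    rw [List.rotate_eq_drop_append_take (by simp; omega)]
    rw [List.drop_append_of_le_length hik, List.take_append_of_le_length hik]
    simp
  have h2 : (u ++ b :: List.replicate t m).rotate i
      = (u.drop i ++ b :: (List.replicate t m ++ u.take i)) := by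
    rw [List.rotate_eq_drop_append_take (by simp; omega)]
    rw [List.drop_append_of_le_length hik, List.take_append_of_le_length hik]
    simp
  rw [h2] at hw'
  show List.Lex (· < ·) _ _
  rw [h1]
  exact lex_key (u.drop i) u (by simp; omega) b b' hb _ _ _ hw'

/-- For `t ≥ 1`, the number of Lyndon words of length `n` ending with exactly `t`
copies of the maximal symbol (of the form `u·b·(q-1)^t`, `b ≠ q-1`) is at most the
number of Lyndon words of length `n - t`. -/
theorem stmt10 (q n t : ℕ) (hq : 0 < q) (ht : 1 ≤ t) (htn : t < n) :
    Set.ncard {w : List (Fin q) | w.length = n ∧ IsLyndonList w ∧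
        ∃ u : List (Fin q), ∃ b : Fin q, (b : ℕ) ≠ q - 1 ∧
          w = u ++ [b] ++ List.replicate t (⟨q - 1, by omega⟩ : Fin q)} ≤
      Set.ncard {w : List (Fin q) | w.length = n - t ∧ IsLyndonList w} := by
  set m : Fin q := ⟨q - 1, by omega⟩ with hm
  set k : ℕ := n - t - 1 with hk
  set S := {w : List (Fin q) | w.length = n ∧ IsLyndonList w ∧
        ∃ u : List (Fin q), ∃ b : Fin q, (b : ℕ) ≠ q - 1 ∧
          w = u ++ [b] ++ List.replicate t m} with hS
  set T := {w : List (Fin q) | w.length = n - t ∧ IsLyndonList w} with hT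
  classical
  -- the map: chop off the final `t` maximal letters and increase the new last letter
  set f : List (Fin q) → List (Fin q) := fun w =>
    w.take k ++ [if h : ((w.drop k).headD m : ℕ) + 1 < q
      then (⟨((w.drop k).headD m : ℕ) + 1, h⟩ : Fin q) else (w.drop k).headD m] with hf
  -- structure of elements of S
  have hstruct : ∀ w ∈ S, ∃ u : List (Fin q), ∃ b : Fin q, ∃ hb : (b : ℕ) < q - 1,
      u.length = k ∧ w = u ++ b :: List.replicate t m ∧
      f w = u ++ [(⟨(b : ℕ) + 1, by omega⟩ : Fin q)] := by
    rintro w ⟨hlen, hlyn, u, b, hb, rfl⟩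
    have hbq : (b : ℕ) < q - 1 := lt_of_le_of_ne (by omega) hb
    have hulen : u.length = k := by
      simp only [List.length_append, List.length_replicate, List.length_cons,
        List.length_nil] at hlen
      omega
    refine ⟨u, b, hbq, hulen, by simp, ?_⟩
    have hw' : u ++ [b] ++ List.replicate t m = u ++ b :: List.replicate t m := by simp
    have htake : (u ++ b :: List.replicate t m).take k = u := by
      rw [← hulen, List.take_left]
    have hdrop : (u ++ b :: List.replicate t m).drop k = b :: List.replicate t m := by
      rw [← hulen, List.drop_left]
    rw [hf]
    simp only [hw', htake, hdrop, List.headD_cons]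
    rw [dif_pos (by omega)]
  -- image of S under f lands in T
  have himg : f '' S ⊆ T := by
    rintro v ⟨w, hw, rfl⟩
    obtain ⟨u, b, hbq, hulen, hwe, hfw⟩ := hstruct w hw
    obtain ⟨hlen, hlyn, -⟩ := hw
    rw [hfw]
    refine ⟨by simp [hulen, hk]; omega, ?_⟩
    have hlt : b < (⟨(b : ℕ) + 1, by omega⟩ : Fin q) := by
      simp [Fin.lt_def]
    exact lyndon_shorten u b _ m hlt t (hwe ▸ hlyn)
  -- f is injective on S
  have hinj : Set.InjOn f S := by
    intro w₁ h₁ w₂ h₂ hfe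
    obtain ⟨u₁, b₁, hb₁, hl₁, he₁, hf₁⟩ := hstruct w₁ h₁
    obtain ⟨u₂, b₂, hb₂, hl₂, he₂, hf₂⟩ := hstruct w₂ h₂
    rw [hf₁, hf₂] at hfe
    obtain ⟨hu, hb⟩ := List.append_inj hfe (by omega)
    have hbb : b₁ = b₂ := by
      have := List.head_eq_of_cons_eq hb
      have : (b₁ : ℕ) + 1 = (b₂ : ℕ) + 1 := congrArg Fin.val this
      exact Fin.ext (by omega)
    rw [he₁, he₂, hu, hbb]
  have hTfin : T.Finite := by
    apply (List.finite_length_eq (α := Fin q) (n := n - t)).subset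
    intro w hw
    exact hw.1
  calc S.ncard = (f '' S).ncard := (Set.ncard_image_of_injOn hinj).symm
    _ ≤ T.ncard := Set.ncard_le_ncard himg hTfin
end

section
/- The number of Lyndon words of length n over a q-letter alphabet that end with the symbol q−2 is at most the number of Lyndon words of length n that end with the maximal symbol q−1 (equivalently, at most ℓ_{n,1} + ℓ_{n,2} + ⋯ + ℓ_{n,n−1}). -/
/-- Prepending a common prefix preserves a strict Lex comparison at the head. -/
lemma lexAux {A : Type*} (r : A → A → Prop) {a a' : A} (h : r a a')
    (c x y : List A) : List.Lex r (c ++ a :: x) (c ++ a' :: y) := by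
  induction c with
  | nil => exact List.Lex.rel h
  | cons hd tl ih => exact List.Lex.cons ih

/-- Decomposition of Lex for equal-length lists. -/
lemma lexDecomp {A : Type*} (r : A → A → Prop) :
    ∀ {X Y : List A}, X.length = Y.length → List.Lex r X Y →
      ∃ c a a' x y, r a a' ∧ X = c ++ a :: x ∧ Y = c ++ a' :: y := by
  intro X Y hlen h
  induction h with
  | nil => simp at hlen
  | @cons a l l' h ih =>
      obtain ⟨c, b, b', x, y, hr, hx, hy⟩ := ih (by simpa using hlen)
      exact ⟨a :: c, b, b', x, y, hr, by simp [hx], by simp [hy]⟩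
  | @rel a l b l' h => exact ⟨[], a, b, l, l', h, rfl, rfl⟩

/-- Core step: if `t ++ d ++ [b] < d ++ b :: t` (lex) and `b ≤ m`, then the same holds
with `b` replaced by `m` in both sides. -/
lemma keyC {A : Type*} [LinearOrder A] {b m : A} (hbm : b ≤ m) {t d : List A}
    (ht : t ≠ []) (h : List.Lex (· < ·) (t ++ d ++ [b]) (d ++ b :: t)) :
    List.Lex (· < ·) (t ++ d ++ [m]) (d ++ m :: t) := by
  rcases eq_or_lt_of_le hbm with rfl | hbm'
  · exact h
  have hlen : (t ++ d ++ [b]).length = (d ++ b :: t).length := by simp; omega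
  obtain ⟨c, a, a', x, y, har, hX, hY⟩ := lexDecomp _ hlen h
  -- helper: decomposition of the modified left word
  have hsplit : x ≠ [] → t ++ d ++ [m] = c ++ a :: (x.dropLast ++ [m]) := by
    intro hx
    have h1 : t ++ d = c ++ a :: x.dropLast := by
      have h0 := congrArg List.dropLast hX
      rw [List.dropLast_concat, List.dropLast_append_cons] at h0
      rw [h0]
      cases x with
      | nil => exact absurd rfl hx
      | cons z zs => simp
    rw [h1]; simp
  -- helper: if x = [] then a = b
  have hxnil : x = [] → a = b := by
    intro hx
    subst hx
    have h0 := congrArg (fun l : List A => l.getLast?) hX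
    simp [List.getLast?_append] at h0
    exact h0.symm
  rcases List.append_eq_append_iff.mp hY with ⟨e, hc, he⟩ | ⟨e, hd, he⟩
  · -- hc : c = d ++ e,  he : b :: t = e ++ a' :: y
    cases e with
    | nil =>
      simp only [List.nil_append] at he
      injection he with h1 h2
      subst h1; subst h2
      simp only [List.append_nil] at hc
      subst hc
      have hx : x ≠ [] := fun hx => absurd (hxnil hx) (ne_of_lt har)
      rw [hsplit hx]
      exact lexAux _ (lt_of_lt_of_le har hbm) _ _ _
    | cons f e' =>
      simp only [List.cons_append] at he
      injection he with h1 h2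
      subst h1
      subst hc
      -- hX : t ++ d ++ [b] = (d ++ b :: e') ++ a :: x ; goal with b < m at position |d|
      have hX'' : t ++ d ++ [m] = d ++ b :: (e' ++ (a :: x).dropLast ++ [m]) := by
        have h0 : t ++ d = (d ++ b :: e') ++ (a :: x).dropLast := by
          have h1 := congrArg List.dropLast hX
          rwa [List.dropLast_concat,
            List.dropLast_append_of_ne_nil (List.cons_ne_nil a x)] at h1
        rw [show t ++ d ++ [m] = (t ++ d) ++ [m] from rfl, h0]
        simp
      rw [hX'']
      exact lexAux _ hbm' _ _ _
  · -- hd : d = c ++ e,  he : a' :: y = e ++ b :: t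
    cases e with
    | nil =>
      simp only [List.nil_append] at he
      injection he with h1 h2
      subst h1; subst h2
      simp only [List.append_nil] at hd
      subst hd
      have hx : x ≠ [] := fun hx => absurd (hxnil hx) (ne_of_lt har)
      rw [hsplit hx]
      exact lexAux _ (lt_of_lt_of_le har hbm) _ _ _
    | cons f e' =>
      simp only [List.cons_append] at he
      injection he with h1 h2
      subst h1; subst h2
      subst hd
      have hx : x ≠ [] := by
        intro hx
        have hl := congrArg List.length hX
        simp [hx] at hl
        have : 1 ≤ t.length := List.length_pos_iff.mpr ht
        omega
      rw [hsplit hx]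
      have hY' : (c ++ a' :: e') ++ m :: t = c ++ a' :: (e' ++ m :: t) := by simp
      rw [hY']
      exact lexAux _ har _ _ _

/-- Increasing the last letter of a Lyndon word keeps it Lyndon. -/
lemma lyndonLast {A : Type*} [LinearOrder A] {u : List A} {b m : A} (hbm : b ≤ m)
    (h : IsLyndonList (u ++ [b])) : IsLyndonList (u ++ [m]) := by
  intro i hi hilen
  have hiu : i ≤ u.length := by
    simp only [List.length_append, List.length_singleton] at hilen; omega
  have hu : u.take i ++ u.drop i = u := List.take_append_drop i u
  have ht : u.take i ≠ [] := by
    intro hnil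
    have h0 : (u.take i).length = 0 := by rw [hnil]; rfl
    rw [List.length_take] at h0
    omega
  have hrot := h i hi (by
    simp only [List.length_append, List.length_singleton] at hilen ⊢; omega)
  rw [List.rotate_eq_drop_append_take (by simp only [List.length_append, List.length_singleton]; omega),
    List.drop_append_of_le_length hiu, List.take_append_of_le_length hiu] at hrot
  rw [List.rotate_eq_drop_append_take (by simp only [List.length_append, List.length_singleton]; omega),
    List.drop_append_of_le_length hiu, List.take_append_of_le_length hiu]
  have hrot' : List.Lex (· < ·) (u.take i ++ u.drop i ++ [b]) (u.drop i ++ b :: u.take i) := by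
    rw [hu]
    have e : u.drop i ++ [b] ++ u.take i = u.drop i ++ b :: u.take i := by simp
    rw [← e]
    exact hrot
  have key := keyC hbm ht hrot'
  have e2 : u.drop i ++ [m] ++ u.take i = u.drop i ++ m :: u.take i := by simp
  rw [e2]
  conv_lhs => rw [← hu]
  exact key

/-- The number of Lyndon words of length `n` ending with the symbol `q-2` is at most
the number of Lyndon words of length `n` ending with the maximal symbol `q-1`. -/
theorem stmt11 (q n : ℕ) (hq : 2 ≤ q) (hn : 1 ≤ n) :
    Set.ncard {w : List (Fin q) | w.length = n ∧ IsLyndonList w ∧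
        ∃ u, w = u ++ [(⟨q - 2, by omega⟩ : Fin q)]} ≤
      Set.ncard {w : List (Fin q) | w.length = n ∧ IsLyndonList w ∧
        ∃ u, w = u ++ [(⟨q - 1, by omega⟩ : Fin q)]} := by
  have hb : (⟨q - 2, by omega⟩ : Fin q) ≤ (⟨q - 1, by omega⟩ : Fin q) := by
    simp [Fin.mk_le_mk]; omega
  refine Set.ncard_le_ncard_of_injOn
      (fun w => w.dropLast ++ [(⟨q - 1, by omega⟩ : Fin q)]) ?_ ?_
      ((List.finite_length_eq (Fin q) n).subset (fun w hw => hw.1))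
  · rintro w ⟨hlen, hlyn, u, rfl⟩
    simp only [Set.mem_setOf_eq, List.dropLast_concat]
    refine ⟨?_, lyndonLast hb hlyn, u, rfl⟩
    simpa using hlen
  · rintro w ⟨_, _, u, rfl⟩ w' ⟨_, _, u', rfl⟩ hww
    simp only [List.dropLast_concat, List.append_cancel_right_eq] at hww
    rw [hww]
end
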